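/- Define on V the operators Q⁻ := ½(b⁺∘f⁻ + f⁻∘b⁺), Q⁺ := ½(b⁻∘f⁺ + f⁺∘b⁻), N_b := ½(b⁺∘b⁻ + b⁻∘b⁺) − (p/2)·id, N_f := ½(f⁺∘f⁻ − f⁻∘f⁺) + (p/2)·id. For each integer k ≥ 0 let W_k ⊆ V be the linear span of { φ_{m,n} : m ≥ 0, 0 ≤ n ≤ p, m+n = k+p } ∪ { ψ_{m,n} : m ≥ 1, 1 ≤ n ≤ p−1, m+n = k+p }, and for each 0 ≤ s ≤ p−1 let U_s ⊆ V be the linear span of { φ_{m,n} : m ≥ 0, 0 ≤ n ≤ p, m+n = s } ∪ { ψ_{m,n} : m ≥ 1, 1 ≤ n ≤ p−1, m+n = s }. Then: (i) each W_k and each U_s is invariant under Q⁺, Q⁻, N_b and N_f; (ii) dim_ℂ W_k = 2p for every k ≥ 0, dim_ℂ U_s = 2s for 1 ≤ s ≤ p−1, and dim_ℂ U_0 = 1; (iii) V is the internal direct sum V = (⊕_{k≥0} W_k) ⊕ (⊕_{s=0}^{p−1} U_s); in particular the representation of any Lie superalgebra acting through linear combinations of id, N_b, N_f, Q⁺, Q⁻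 on V is decomposable. -/
import Mathlib


open scoped BigOperators

/-- Indices of the basis vectors `φ_{m,n}`: pairs `(m,n)` of naturals with `n ≤ p`. -/
abbrev PhiIdx (p : ℕ) := {mn : ℕ × ℕ // mn.2 ≤ p}

/-- Indices of the basis vectors `ψ_{m,n}`: pairs `(m,n)` of naturals with
`1 ≤ m` and `1 ≤ n ≤ p - 1`. -/
abbrev PsiIdx (p : ℕ) := {mn : ℕ × ℕ // 1 ≤ mn.1 ∧ 1 ≤ mn.2 ∧ mn.2 + 1 ≤ p}

/-- The index set of the basis of the Fock-like carrier space. -/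
abbrev FockIdx (p : ℕ) := PhiIdx p ⊕ PsiIdx p

/-- The Fock-like carrier space: the free `ℂ`-vector space on the basis
`{φ_{m,n} : m ≥ 0, 0 ≤ n ≤ p} ∪ {ψ_{m,n} : m ≥ 1, 1 ≤ n ≤ p−1}`. -/
abbrev FockV (p : ℕ) := FockIdx p →₀ ℂ

/-- The vector `φ_{m,n}`, extended by `0` outside the range `m ≥ 0`, `0 ≤ n ≤ p`. -/
noncomputable def phi (p : ℕ) (m n : ℤ) : FockV p :=
  if h : 0 ≤ m ∧ 0 ≤ n ∧ n ≤ (p : ℤ) then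
    Finsupp.single (Sum.inl ⟨(m.toNat, n.toNat), by show n.toNat ≤ p; omega⟩) 1
  else 0

/-- The vector `ψ_{m,n}`, extended by the conventions `ψ_{m,0} = ψ_{0,n} = 0`,
`ψ_{m,p} = (1/p)·φ_{m,p}` (for `m ≥ 1`) and `ψ_{m,n} = 0` outside the range. -/
noncomputable def psi (p : ℕ) (m n : ℤ) : FockV p :=
  if h : 1 ≤ m ∧ 1 ≤ n ∧ n ≤ (p : ℤ) - 1 then
    Finsupp.single (Sum.inr ⟨(m.toNat, n.toNat),
      ⟨by show 1 ≤ m.toNat; omega, by show 1 ≤ n.toNat; omega,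
       by show n.toNat + 1 ≤ p; omega⟩⟩) 1
  else if 1 ≤ m ∧ n = (p : ℤ) then (1 / (p : ℂ)) • phi p m n
  else 0

/-- Image of the basis vector `φ_{m,n}` under `b⁺`. -/
noncomputable def bpPhi (p : ℕ) (m n : ℤ) : FockV p :=
  ((-1 : ℂ) ^ n) • phi p (m + 1) n - (2 * (n : ℂ) * (-1 : ℂ) ^ n) • psi p (m + 1) n

/-- Image of the basis vector `ψ_{m,n}` under `b⁺`. -/
noncomputable def bpPsi (p : ℕ) (m n : ℤ) : FockV p :=
  (-(-1 : ℂ) ^ n) • psi p (m + 1) n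

/-- Image of the basis vector `φ_{m,n}` under `b⁻`. -/
noncomputable def bmPhi (p : ℕ) (m n : ℤ) : FockV p :=
  if Even m then
    ((-1 : ℂ) ^ n * (m : ℂ)) • phi p (m - 1) n
      - (2 * (-1 : ℂ) ^ n * (n : ℂ) * (m : ℂ)) • psi p (m - 1) n
  else
    (-(-1 : ℂ) ^ n * (2 * (n : ℂ) - (m : ℂ) - ((p : ℂ) - 1))) • phi p (m - 1) n
      - (2 * (-1 : ℂ) ^ n * (n : ℂ) * ((m : ℂ) - 1)) • psi p (m - 1) n

/-- Image of the basis vector `ψ_{m,n}` under `b⁻`. -/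
noncomputable def bmPsi (p : ℕ) (m n : ℤ) : FockV p :=
  if Even m then
    (-(-1 : ℂ) ^ n) • phi p (m - 1) n
      + ((-1 : ℂ) ^ n * (2 * (n : ℂ) - (m : ℂ) - (p : ℂ))) • psi p (m - 1) n
  else
    (-(-1 : ℂ) ^ n) • phi p (m - 1) n
      - ((-1 : ℂ) ^ n * ((m : ℂ) - 1)) • psi p (m - 1) n

/-- Image of the basis vector `φ_{m,n}` under `f⁺`. -/
noncomputable def fpPhi (p : ℕ) (m n : ℤ) : FockV p := phi p m (n + 1)

/-- Image of the basis vector `ψ_{m,n}` under `f⁺`. -/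
noncomputable def fpPsi (p : ℕ) (m n : ℤ) : FockV p := psi p m (n + 1)

/-- Image of the basis vector `φ_{m,n}` under `f⁻`. -/
noncomputable def fmPhi (p : ℕ) (m n : ℤ) : FockV p :=
  ((n : ℂ) * ((p : ℂ) + 1 - (n : ℂ))) • phi p m (n - 1)

/-- Image of the basis vector `ψ_{m,n}` under `f⁻`. -/
noncomputable def fmPsi (p : ℕ) (m n : ℤ) : FockV p :=
  phi p m (n - 1) + (((n : ℂ) - 1) * ((p : ℂ) - (n : ℂ))) • psi p m (n - 1)

/-- The linear operator on the Fock-like space determined by its values `F m n`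
on the basis vectors `φ_{m,n}` and `G m n` on the basis vectors `ψ_{m,n}`. -/
noncomputable def mkOp (p : ℕ) (F G : ℤ → ℤ → FockV p) : Module.End ℂ (FockV p) :=
  Finsupp.lift (FockV p) ℂ (FockIdx p) fun x =>
    match x with
    | Sum.inl a => F (a.1.1 : ℤ) (a.1.2 : ℤ)
    | Sum.inr a => G (a.1.1 : ℤ) (a.1.2 : ℤ)

/-- The operator `b⁺`. -/
noncomputable def opBp (p : ℕ) : Module.End ℂ (FockV p) := mkOp p (bpPhi p) (bpPsi p)

/-- The operator `b⁻`. -/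
noncomputable def opBm (p : ℕ) : Module.End ℂ (FockV p) := mkOp p (bmPhi p) (bmPsi p)

/-- The operator `f⁺`. -/
noncomputable def opFp (p : ℕ) : Module.End ℂ (FockV p) := mkOp p (fpPhi p) (fpPsi p)

/-- The operator `f⁻`. -/
noncomputable def opFm (p : ℕ) : Module.End ℂ (FockV p) := mkOp p (fmPhi p) (fmPsi p)

/-- `b^ξ` for a sign `ξ`: `b 1 = b⁺`, `b (-1) = b⁻`. -/
noncomputable def opB (p : ℕ) (ξ : ℤ) : Module.End ℂ (FockV p) :=
  if ξ = 1 then opBp p else opBm p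

/-- `f^ξ` for a sign `ξ`: `f 1 = f⁺`, `f (-1) = f⁻`. -/
noncomputable def opF (p : ℕ) (ξ : ℤ) : Module.End ℂ (FockV p) :=
  if ξ = 1 then opFp p else opFm p

/-- The commutator `[X, Y] = X∘Y − Y∘X` of operators. -/
noncomputable def opComm {p : ℕ} (X Y : Module.End ℂ (FockV p)) : Module.End ℂ (FockV p) :=
  X * Y - Y * X

/-- The anticommutator `{X, Y} = X∘Y + Y∘X` of operators. -/
noncomputable def opAComm {p : ℕ} (X Y : Module.End ℂ (FockV p)) : Module.End ℂ (FockV p) :=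
  X * Y + Y * X

/-- A sign, i.e. `+1` or `-1`, regarded as an integer. -/
def IsSign (x : ℤ) : Prop := x = 1 ∨ x = -1

/-- The operator `Q⁻ := ½(b⁺∘f⁻ + f⁻∘b⁺)`. -/
noncomputable def opQm (p : ℕ) : Module.End ℂ (FockV p) :=
  (1 / 2 : ℂ) • (opBp p * opFm p + opFm p * opBp p)

/-- The operator `Q⁺ := ½(b⁻∘f⁺ + f⁺∘b⁻)`. -/
noncomputable def opQp (p : ℕ) : Module.End ℂ (FockV p) :=
  (1 / 2 : ℂ) • (opBm p * opFp p + opFp p * opBm p)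

/-- The number operator `N_b := ½(b⁺∘b⁻ + b⁻∘b⁺) − (p/2)·id`. -/
noncomputable def opNb (p : ℕ) : Module.End ℂ (FockV p) :=
  (1 / 2 : ℂ) • (opBp p * opBm p + opBm p * opBp p) - ((p : ℂ) / 2) • 1

/-- The number operator `N_f := ½(f⁺∘f⁻ − f⁻∘f⁺) + (p/2)·id`. -/
noncomputable def opNf (p : ℕ) : Module.End ℂ (FockV p) :=
  (1 / 2 : ℂ) • (opFp p * opFm p - opFm p * opFp p) + ((p : ℂ) / 2) • 1

/-- The subspace `W_k`, spanned by the basis vectors `φ_{m,n}`, `ψ_{m,n}` with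
`m + n = k + p`. -/
noncomputable def Wsub (p k : ℕ) : Submodule ℂ (FockV p) :=
  Submodule.span ℂ
    ({v | (∃ m n : ℤ, 0 ≤ m ∧ 0 ≤ n ∧ n ≤ (p : ℤ) ∧ m + n = (k : ℤ) + (p : ℤ) ∧ v = phi p m n)
        ∨ (∃ m n : ℤ, 1 ≤ m ∧ 1 ≤ n ∧ n ≤ (p : ℤ) - 1 ∧ m + n = (k : ℤ) + (p : ℤ) ∧
            v = psi p m n)} : Set (FockV p))

/-- The subspace `U_s`, spanned by the basis vectors `φ_{m,n}`, `ψ_{m,n}` with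
`m + n = s`. -/
noncomputable def Usub (p s : ℕ) : Submodule ℂ (FockV p) :=
  Submodule.span ℂ
    ({v | (∃ m n : ℤ, 0 ≤ m ∧ 0 ≤ n ∧ n ≤ (p : ℤ) ∧ m + n = (s : ℤ) ∧ v = phi p m n)
        ∨ (∃ m n : ℤ, 1 ≤ m ∧ 1 ≤ n ∧ n ≤ (p : ℤ) - 1 ∧ m + n = (s : ℤ) ∧
            v = psi p m n)} : Set (FockV p))

/-! ### Auxiliary development: degree slices -/

/-- The degree `m + n` of a basis index. -/
def fdeg {p : ℕ} : FockIdx p → ℕ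
  | Sum.inl a => a.1.1 + a.1.2
  | Sum.inr a => a.1.1 + a.1.2

/-- The degree-`d` slice of the Fock space. -/
noncomputable def Dsub (p : ℕ) (d : ℤ) : Submodule ℂ (FockV p) :=
  Finsupp.supported ℂ ℂ {i : FockIdx p | (fdeg i : ℤ) = d}

lemma phi_mem (p : ℕ) (m n d : ℤ) (h : m + n = d) : phi p m n ∈ Dsub p d := by
  rw [phi]
  split
  · rename_i hr
    apply Finsupp.single_mem_supported
    simp only [Set.mem_setOf_eq, fdeg]
    push_cast
    omega
  · exact Submodule.zero_mem _

lemma psi_mem (p : ℕ) (m n d : ℤ) (h : m + n = d) : psi p m n ∈ Dsub p d := by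
  rw [psi]
  split
  · rename_i hr
    apply Finsupp.single_mem_supported
    simp only [Set.mem_setOf_eq, fdeg]
    push_cast
    omega
  · split
    · exact Submodule.smul_mem _ _ (phi_mem p m n d h)
    · exact Submodule.zero_mem _

lemma mkOp_single_inl (p : ℕ) (F G : ℤ → ℤ → FockV p) (a : PhiIdx p) :
    mkOp p F G (Finsupp.single (Sum.inl a) 1) = F a.1.1 a.1.2 := by
  simp [mkOp, Finsupp.lift_apply, Finsupp.sum_single_index]

lemma mkOp_single_inr (p : ℕ) (F G : ℤ → ℤ → FockV p) (a : PsiIdx p) :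
    mkOp p F G (Finsupp.single (Sum.inr a) 1) = G a.1.1 a.1.2 := by
  simp [mkOp, Finsupp.lift_apply, Finsupp.sum_single_index]

lemma map_deg {p : ℕ} (T : Module.End ℂ (FockV p)) (d e : ℤ)
    (h : ∀ i : FockIdx p, (fdeg i : ℤ) = d → T (Finsupp.single i 1) ∈ Dsub p e) :
    ∀ x ∈ Dsub p d, T x ∈ Dsub p e := by
  intro x hx
  rw [Dsub, Finsupp.supported_eq_span_single] at hx
  induction hx using Submodule.span_induction with
  | mem v hv => obtain ⟨i, hi, rfl⟩ := hv; exact h i hi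
  | zero => simp
  | add a b _ _ ha hb => rw [map_add]; exact add_mem ha hb
  | smul c a _ ha => rw [map_smul]; exact Submodule.smul_mem _ _ ha

lemma bp_shift (p : ℕ) (d : ℤ) : ∀ x ∈ Dsub p d, opBp p x ∈ Dsub p (d + 1) := by
  apply map_deg
  rintro (a | a) hi <;> simp only [fdeg, Set.mem_setOf_eq] at hi
  · rw [opBp, mkOp_single_inl, bpPhi]
    exact sub_mem (Submodule.smul_mem _ _ (phi_mem _ _ _ _ (by push_cast at hi ⊢; omega)))
      (Submodule.smul_mem _ _ (psi_mem _ _ _ _ (by push_cast at hi ⊢; omega)))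
  · rw [opBp, mkOp_single_inr, bpPsi]
    exact Submodule.smul_mem _ _ (psi_mem _ _ _ _ (by push_cast at hi ⊢; omega))

lemma bm_shift (p : ℕ) (d : ℤ) : ∀ x ∈ Dsub p d, opBm p x ∈ Dsub p (d - 1) := by
  apply map_deg
  rintro (a | a) hi <;> simp only [fdeg, Set.mem_setOf_eq] at hi
  · rw [opBm, mkOp_single_inl, bmPhi]
    split <;>
    exact sub_mem (Submodule.smul_mem _ _ (phi_mem _ _ _ _ (by push_cast at hi ⊢; omega)))
      (Submodule.smul_mem _ _ (psi_mem _ _ _ _ (by push_cast at hi ⊢; omega)))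
  · rw [opBm, mkOp_single_inr, bmPsi]
    split
    · exact add_mem (Submodule.smul_mem _ _ (phi_mem _ _ _ _ (by push_cast at hi ⊢; omega)))
        (Submodule.smul_mem _ _ (psi_mem _ _ _ _ (by push_cast at hi ⊢; omega)))
    · exact sub_mem (Submodule.smul_mem _ _ (phi_mem _ _ _ _ (by push_cast at hi ⊢; omega)))
        (Submodule.smul_mem _ _ (psi_mem _ _ _ _ (by push_cast at hi ⊢; omega)))

lemma fp_shift (p : ℕ) (d : ℤ) : ∀ x ∈ Dsub p d, opFp p x ∈ Dsub p (d + 1) := by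
  apply map_deg
  rintro (a | a) hi <;> simp only [fdeg, Set.mem_setOf_eq] at hi
  · rw [opFp, mkOp_single_inl, fpPhi]
    exact phi_mem _ _ _ _ (by push_cast at hi ⊢; omega)
  · rw [opFp, mkOp_single_inr, fpPsi]
    exact psi_mem _ _ _ _ (by push_cast at hi ⊢; omega)

lemma fm_shift (p : ℕ) (d : ℤ) : ∀ x ∈ Dsub p d, opFm p x ∈ Dsub p (d - 1) := by
  apply map_deg
  rintro (a | a) hi <;> simp only [fdeg, Set.mem_setOf_eq] at hi
  · rw [opFm, mkOp_single_inl, fmPhi]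
    exact Submodule.smul_mem _ _ (phi_mem _ _ _ _ (by push_cast at hi ⊢; omega))
  · rw [opFm, mkOp_single_inr, fmPsi]
    exact add_mem (phi_mem _ _ _ _ (by push_cast at hi ⊢; omega))
      (Submodule.smul_mem _ _ (psi_mem _ _ _ _ (by push_cast at hi ⊢; omega)))

lemma qp_mem (p : ℕ) (d : ℤ) : ∀ x ∈ Dsub p d, opQp p x ∈ Dsub p d := by
  intro x hx
  rw [opQp]
  simp only [LinearMap.smul_apply, LinearMap.add_apply, Module.End.mul_apply]
  refine Submodule.smul_mem _ _ (add_mem ?_ ?_)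
  · have h := bm_shift p (d + 1) _ (fp_shift p d x hx)
    simpa using h
  · have h := fp_shift p (d - 1) _ (bm_shift p d x hx)
    simpa using h

lemma qm_mem (p : ℕ) (d : ℤ) : ∀ x ∈ Dsub p d, opQm p x ∈ Dsub p d := by
  intro x hx
  rw [opQm]
  simp only [LinearMap.smul_apply, LinearMap.add_apply, Module.End.mul_apply]
  refine Submodule.smul_mem _ _ (add_mem ?_ ?_)
  · have h := bp_shift p (d - 1) _ (fm_shift p d x hx)
    simpa using h
  · have h := fm_shift p (d + 1) _ (bp_shift p d x hx)
    simpa using h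

lemma nb_mem (p : ℕ) (d : ℤ) : ∀ x ∈ Dsub p d, opNb p x ∈ Dsub p d := by
  intro x hx
  rw [opNb]
  simp only [LinearMap.sub_apply, LinearMap.smul_apply, LinearMap.add_apply,
    Module.End.mul_apply, Module.End.one_apply]
  refine sub_mem (Submodule.smul_mem _ _ (add_mem ?_ ?_)) (Submodule.smul_mem _ _ hx)
  · have h := bp_shift p (d - 1) _ (bm_shift p d x hx)
    simpa using h
  · have h := bm_shift p (d + 1) _ (bp_shift p d x hx)
    simpa using h

lemma nf_mem (p : ℕ) (d : ℤ) : ∀ x ∈ Dsub p d, opNf p x ∈ Dsub p d := by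
  intro x hx
  rw [opNf]
  simp only [LinearMap.add_apply, LinearMap.smul_apply, LinearMap.sub_apply,
    Module.End.mul_apply, Module.End.one_apply]
  refine add_mem (Submodule.smul_mem _ _ (sub_mem ?_ ?_)) (Submodule.smul_mem _ _ hx)
  · have h := fp_shift p (d - 1) _ (fm_shift p d x hx)
    simpa using h
  · have h := fm_shift p (d + 1) _ (fp_shift p d x hx)
    simpa using h

lemma span_eq_Dsub (p : ℕ) (d : ℤ) :
    Submodule.span ℂ
      ({v | (∃ m n : ℤ, 0 ≤ m ∧ 0 ≤ n ∧ n ≤ (p : ℤ) ∧ m + n = d ∧ v = phi p m n)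
          ∨ (∃ m n : ℤ, 1 ≤ m ∧ 1 ≤ n ∧ n ≤ (p : ℤ) - 1 ∧ m + n = d ∧
              v = psi p m n)} : Set (FockV p)) = Dsub p d := by
  rw [Dsub, Finsupp.supported_eq_span_single]
  congr 1
  ext v
  constructor
  · rintro (⟨m, n, hm, hn, hnp, hsum, rfl⟩ | ⟨m, n, hm, hn, hnp, hsum, rfl⟩)
    · refine ⟨Sum.inl ⟨(m.toNat, n.toNat), by simp; omega⟩,
        by simp only [Set.mem_setOf_eq, fdeg]; push_cast; omega, ?_⟩
      rw [phi, dif_pos ⟨hm, hn, hnp⟩]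
    · refine ⟨Sum.inr ⟨(m.toNat, n.toNat), ⟨by simp; omega, by simp; omega, by simp; omega⟩⟩,
        by simp only [Set.mem_setOf_eq, fdeg]; push_cast; omega, ?_⟩
      rw [psi, dif_pos ⟨hm, by omega, by omega⟩]
  · rintro ⟨i, hi, rfl⟩
    simp only [Set.mem_setOf_eq] at hi
    match i with
    | Sum.inl ⟨(m, n), hn⟩ =>
      simp only [fdeg] at hi
      left
      refine ⟨m, n, by positivity, by positivity, by exact_mod_cast hn, by push_cast; omega, ?_⟩
      rw [phi, dif_pos ⟨by positivity, by positivity, by exact_mod_cast hn⟩]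
      simp
    | Sum.inr ⟨(m, n), hmn⟩ =>
      simp only [fdeg] at hi
      obtain ⟨h1, h2, h3⟩ := hmn
      right
      refine ⟨m, n, by exact_mod_cast h1, by exact_mod_cast h2, by push_cast; omega,
        by push_cast; omega, ?_⟩
      rw [psi, dif_pos ⟨by exact_mod_cast h1, by exact_mod_cast h2, by push_cast; omega⟩]
      simp

lemma Wsub_eq (p k : ℕ) : Wsub p k = Dsub p ((k : ℤ) + (p : ℤ)) := span_eq_Dsub p _

lemma Usub_eq (p s : ℕ) : Usub p s = Dsub p (s : ℤ) := span_eq_Dsub p _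

/-- The slice of the index set of degree `d`, parametrized explicitly. -/
def degEquiv (p d : ℕ) :
    {i : FockIdx p // (fdeg i : ℤ) = (d : ℤ)} ≃
      (Fin (min d p + 1) ⊕ Fin (min (d - 1) (p - 1))) where
  toFun i :=
    match i with
    | ⟨Sum.inl a, h⟩ => Sum.inl ⟨a.1.2, by
        have := a.2
        simp only [fdeg, Nat.cast_inj] at h
        omega⟩
    | ⟨Sum.inr a, h⟩ => Sum.inr ⟨a.1.2 - 1, by
        obtain ⟨h1, h2, h3⟩ := a.2
        simp only [fdeg, Nat.cast_inj] at h
        omega⟩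
  invFun j :=
    match j with
    | Sum.inl ⟨n, hn⟩ => ⟨Sum.inl ⟨(d - n, n), by omega⟩, by
        simp only [fdeg, Nat.cast_inj]; omega⟩
    | Sum.inr ⟨j, hj⟩ => ⟨Sum.inr ⟨(d - (j + 1), j + 1), ⟨by omega, by omega, by omega⟩⟩, by
        simp only [fdeg, Nat.cast_inj]; omega⟩
  left_inv := by
    rintro ⟨(⟨⟨m, n⟩, h⟩ | ⟨⟨m, n⟩, h⟩), hd⟩ <;>
      simp only [fdeg, Nat.cast_inj] at hd <;>
      apply Subtype.ext <;>
      simp only [Sum.inl.injEq, Sum.inr.injEq, Subtype.mk.injEq, Prod.mk.injEq]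
    · exact ⟨by omega, trivial⟩
    · exact ⟨by omega, by omega⟩
  right_inv := by
    rintro (⟨n, hn⟩ | ⟨j, hj⟩) <;>
      simp only [Sum.inl.injEq, Sum.inr.injEq, Fin.mk.injEq] <;>
      omega

lemma Dsub_finrank (p d : ℕ) :
    Module.finrank ℂ (Dsub p (d : ℤ)) = min d p + 1 + min (d - 1) (p - 1) := by
  haveI : Fintype {i : FockIdx p // (fdeg i : ℤ) = (d : ℤ)} :=
    Fintype.ofEquiv _ (degEquiv p d).symm
  have e : Dsub p (d : ℤ) ≃ₗ[ℂ]
      ((Fin (min d p + 1) ⊕ Fin (min (d - 1) (p - 1))) →₀ ℂ) :=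
    (Finsupp.supportedEquivFinsupp {i : FockIdx p | (fdeg i : ℤ) = (d : ℤ)}).trans
      (Finsupp.domLCongr (degEquiv p d))
  rw [e.finrank_eq, Module.finrank_finsupp_self]
  simp

/-- The natural degree attached to an index of the decomposition. -/
def nOf (p : ℕ) : ℕ ⊕ Fin p → ℕ := Sum.elim (fun k => k + p) (fun s => s.1)

lemma fock_isInternal (p : ℕ) :
    DirectSum.IsInternal (fun i : ℕ ⊕ Fin p => Dsub p ((nOf p i : ℕ) : ℤ)) := by
  rw [DirectSum.isInternal_submodule_iff_iSupIndep_and_iSup_eq_top]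
  constructor
  · intro i
    refine Disjoint.mono_right ?_
      (Finsupp.disjoint_supported_supported
        (s := {x : FockIdx p | (fdeg x : ℤ) = (nOf p i : ℤ)})
        (t := ⋃ j ∈ {j : ℕ ⊕ Fin p | j ≠ i}, {x : FockIdx p | (fdeg x : ℤ) = (nOf p j : ℤ)})
        ?_)
    · refine iSup_le fun j => iSup_le fun hj => ?_
      exact Finsupp.supported_mono
        (Set.subset_iUnion₂ (s := fun j _ => {x : FockIdx p | (fdeg x : ℤ) = (nOf p j : ℤ)}) j hj)
    · rw [Set.disjoint_left]
      rintro x hx hx'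
      simp only [Set.mem_iUnion, Set.mem_setOf_eq, exists_prop] at hx hx'
      obtain ⟨j, hj, hxj⟩ := hx'
      apply hj
      have hnum : nOf p j = nOf p i := by omega
      rcases j with j | j <;> rcases i with i | i <;>
        simp only [nOf, Sum.elim_inl, Sum.elim_inr] at hnum <;>
        first
          | (exact congrArg Sum.inl (by omega))
          | (exact congrArg Sum.inr (Fin.ext (by omega)))
          | (exact absurd hnum (by omega))
  · simp only [Dsub]
    rw [eq_top_iff,
      ← (Finsupp.supported_univ : Finsupp.supported ℂ ℂ (Set.univ : Set (FockIdx p)) = ⊤)]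
    have : (Set.univ : Set (FockIdx p)) =
        ⋃ i : ℕ ⊕ Fin p, {x : FockIdx p | (fdeg x : ℤ) = (nOf p i : ℤ)} := by
      ext x
      simp only [Set.mem_univ, Set.mem_iUnion, Set.mem_setOf_eq, true_iff, Nat.cast_inj]
      by_cases h : fdeg x < p
      · exact ⟨Sum.inr ⟨fdeg x, h⟩, rfl⟩
      · exact ⟨Sum.inl (fdeg x - p), by simp [nOf]; omega⟩
    rw [this, Finsupp.supported_iUnion]

/-- The Fock-like carrier space decomposes: each `W_k` (`k ≥ 0`) and each `U_s`
(`0 ≤ s ≤ p−1`) is invariant under `Q⁺`, `Q⁻`, `N_b`, `N_f`; their dimensions are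
`2p`, `2s` (resp. `1` for `s = 0`); and `V` is the internal direct sum of all of them.
In particular any Lie superalgebra representation acting through linear combinations of
`id, N_b, N_f, Q⁺, Q⁻` on `V` is decomposable. -/
theorem fock_space_decomposition (p : ℕ) (hp : 1 ≤ p) :
    (∀ k : ℕ,
      Submodule.map (opQp p) (Wsub p k) ≤ Wsub p k ∧
      Submodule.map (opQm p) (Wsub p k) ≤ Wsub p k ∧
      Submodule.map (opNb p) (Wsub p k) ≤ Wsub p k ∧
      Submodule.map (opNf p) (Wsub p k) ≤ Wsub p k) ∧
    (∀ s : ℕ, s < p →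
      Submodule.map (opQp p) (Usub p s) ≤ Usub p s ∧
      Submodule.map (opQm p) (Usub p s) ≤ Usub p s ∧
      Submodule.map (opNb p) (Usub p s) ≤ Usub p s ∧
      Submodule.map (opNf p) (Usub p s) ≤ Usub p s) ∧
    (∀ k : ℕ, Module.finrank ℂ (Wsub p k) = 2 * p) ∧
    (∀ s : ℕ, 1 ≤ s → s < p → Module.finrank ℂ (Usub p s) = 2 * s) ∧
    Module.finrank ℂ (Usub p 0) = 1 ∧
    DirectSum.IsInternal (fun i : ℕ ⊕ Fin p => Sum.elim (Wsub p) (fun s => Usub p s.1) i) := by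
  refine ⟨?_, ?_, ?_, ?_, ?_, ?_⟩
  · intro k
    rw [Wsub_eq]
    refine ⟨?_, ?_, ?_, ?_⟩ <;> rintro _ ⟨x, hx, rfl⟩
    · exact qp_mem p _ x hx
    · exact qm_mem p _ x hx
    · exact nb_mem p _ x hx
    · exact nf_mem p _ x hx
  · intro s _
    rw [Usub_eq]
    refine ⟨?_, ?_, ?_, ?_⟩ <;> rintro _ ⟨x, hx, rfl⟩
    · exact qp_mem p _ x hx
    · exact qm_mem p _ x hx
    · exact nb_mem p _ x hx
    · exact nf_mem p _ x hx
  · intro k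
    rw [Wsub_eq, show (k : ℤ) + (p : ℤ) = ((k + p : ℕ) : ℤ) by push_cast; ring,
      Dsub_finrank]
    omega
  · intro s hs1 hs2
    rw [Usub_eq, Dsub_finrank]
    omega
  · rw [Usub_eq, Dsub_finrank]
    omega
  · have hfam : (fun i : ℕ ⊕ Fin p => Sum.elim (Wsub p) (fun s => Usub p s.1) i)
        = fun i : ℕ ⊕ Fin p => Dsub p ((nOf p i : ℕ) : ℤ) := by
      funext i
      cases i with
      | inl k =>
        simp only [Sum.elim_inl, nOf, Wsub_eq]
        congr 1
      | inr s =>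
        simp only [Sum.elim_inr, nOf, Usub_eq]
    rw [hfam]
    exact fock_isInternal p
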